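/- Let λ < 1/2 and let F = F_λ. Let X be a random variable with values in (0,∞) having tail law (ξ,β) and satisfying E[F(X)²] < ∞. For p > 0 and a positive integer n, set Y_{p,n} := F(pX + 1/n) − F(pβ + 1/n). Then for every ε > 0 there exists δ > 0 such that for all p > 0 and all positive integers n with n·p ≤ δ, one has |E[Y_{p,n}]| ≤ ε·√(φ(p,n)). -/

import Mathlib

open MeasureTheory Real Filter Topology

/-- The transformation function `F_λ`. -/
noncomputable def Flam (lam : ℝ) (x : ℝ) : ℝ :=
  if lam = 0 then Real.log x else x ^ lam / lam

/-- The weight `φ(p,n) = p^{2λ} (1 + (βnp)⁻¹)^{-1+2λ}`. -/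
noncomputable def phiW (lam β : ℝ) (p : ℝ) (n : ℕ) : ℝ :=
  p ^ (2 * lam) * (1 + (β * n * p)⁻¹) ^ (-1 + 2 * lam)


lemma flam_diff_eq (lam : ℝ) {a b : ℝ} (ha : 0 < a) (hab : a ≤ b) :
    Flam lam b - Flam lam a = ∫ u in a..b, u ^ (lam - 1) := by
  have hb : 0 < b := lt_of_lt_of_le ha hab
  have h0 : (0:ℝ) ∉ Set.uIcc a b := Set.notMem_uIcc_of_lt ha hb
  by_cases h : lam = 0
  · subst h
    simp only [Flam, if_pos rfl]
    rw [show (0:ℝ) - 1 = -1 by ring]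
    simp_rw [Real.rpow_neg_one]
    rw [integral_inv_of_pos ha hb, Real.log_div hb.ne' ha.ne']
    simp
  · simp only [Flam, if_neg h]
    rw [integral_rpow (Or.inr ⟨by intro hc; apply h; linarith [sub_eq_iff_eq_add.mp hc], h0⟩)]
    rw [sub_add_cancel, sub_div]

lemma flam_mono (lam : ℝ) {a b : ℝ} (ha : 0 < a) (hab : a ≤ b) :
    Flam lam a ≤ Flam lam b := by
  have h := flam_diff_eq lam ha hab
  have h2 : 0 ≤ ∫ u in a..b, u ^ (lam - 1) :=
    intervalIntegral.integral_nonneg hab (fun u hu => Real.rpow_nonneg (le_trans ha.le hu.1) _)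
  linarith

lemma flam_le_lin {lam : ℝ} (hlam : lam < 1) {a h : ℝ} (ha : 0 < a) (hh : 0 ≤ h) :
    Flam lam (a + h) - Flam lam a ≤ h * a ^ (lam - 1) := by
  rw [flam_diff_eq lam ha (by linarith)]
  have h0 : (0:ℝ) ∉ Set.uIcc a (a + h) := Set.notMem_uIcc_of_lt ha (by linarith)
  calc (∫ u in a..(a+h), u ^ (lam - 1))
      ≤ ∫ _u in a..(a+h), a ^ (lam - 1) := by
        apply intervalIntegral.integral_mono_on (by linarith)
          (intervalIntegral.intervalIntegrable_rpow (Or.inr h0)) intervalIntegrable_const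
        intro u hu
        exact Real.rpow_le_rpow_of_nonpos ha hu.1 (by linarith)
    _ = h * a ^ (lam - 1) := by
        rw [intervalIntegral.integral_const]
        simp [smul_eq_mul]

lemma rpow_sub_le_34 {t w : ℝ} (ht : 0 ≤ t) (hw : 0 ≤ w) :
    (t + w) ^ ((3:ℝ)/4) ≤ t ^ ((3:ℝ)/4) + w ^ ((3:ℝ)/4) := by
  have key := NNReal.rpow_add_le_add_rpow (t.toNNReal) (w.toNNReal) (by norm_num : (0:ℝ) ≤ 3/4) (by norm_num)
  have := NNReal.coe_le_coe.mpr key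
  push_cast [NNReal.coe_rpow] at this
  convert this using 2 <;> simp [Real.coe_toNNReal', ht, hw, le_max_iff, max_eq_left]

lemma flam_le_34 {lam : ℝ} (hlam : lam < 1/2) {t w : ℝ} (ht : 0 < t) (hw : 0 ≤ w) :
    Flam lam (t + w) - Flam lam t ≤ (4/3) * t ^ (lam - 3/4) * w ^ ((3:ℝ)/4) := by
  rw [flam_diff_eq lam ht (by linarith)]
  have h0 : (0:ℝ) ∉ Set.uIcc t (t + w) := Set.notMem_uIcc_of_lt ht (by linarith)
  have step1 : (∫ u in t..(t+w), u ^ (lam - 1))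
      ≤ ∫ u in t..(t+w), t ^ (lam - 3/4) * u ^ (-(1/4):ℝ) := by
    apply intervalIntegral.integral_mono_on (by linarith)
      (intervalIntegral.intervalIntegrable_rpow (Or.inr h0))
      ((intervalIntegral.intervalIntegrable_rpow (Or.inr h0)).const_mul _)
    intro u hu
    have hu0 : 0 < u := lt_of_lt_of_le ht hu.1
    rw [show lam - 1 = (lam - 3/4) + (-(1/4)) by ring, Real.rpow_add hu0]
    exact mul_le_mul_of_nonneg_right
      (Real.rpow_le_rpow_of_nonpos ht hu.1 (by linarith)) (Real.rpow_nonneg hu0.le _)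
  have step2 : (∫ u in t..(t+w), t ^ (lam - 3/4) * u ^ (-(1/4):ℝ))
      = t ^ (lam - 3/4) * (((t+w) ^ ((3:ℝ)/4) - t ^ ((3:ℝ)/4)) / (3/4)) := by
    rw [intervalIntegral.integral_const_mul,
      integral_rpow (Or.inl (by norm_num))]
    norm_num
  have step3 : ((t+w) ^ ((3:ℝ)/4) - t ^ ((3:ℝ)/4)) / (3/4) ≤ (4/3) * w ^ ((3:ℝ)/4) := by
    have := rpow_sub_le_34 ht.le hw
    rw [div_le_iff₀ (by norm_num : (0:ℝ) < 3/4)]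
    nlinarith [Real.rpow_nonneg hw ((3:ℝ)/4)]
  calc (∫ u in t..(t+w), u ^ (lam - 1))
      ≤ t ^ (lam - 3/4) * (((t+w) ^ ((3:ℝ)/4) - t ^ ((3:ℝ)/4)) / (3/4)) := by
        rw [← step2]; exact step1
    _ ≤ t ^ (lam - 3/4) * ((4/3) * w ^ ((3:ℝ)/4)) :=
        mul_le_mul_of_nonneg_left step3 (Real.rpow_nonneg ht.le _)
    _ = (4/3) * t ^ (lam - 3/4) * w ^ ((3:ℝ)/4) := by ring



lemma tail_moment {ξ β : ℝ} (hξ : 0 < ξ) (hβ : 0 < β)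
    {Ω : Type*} [MeasurableSpace Ω] (P : Measure Ω) [IsProbabilityMeasure P]
    (X : Ω → ℝ) (hX : Measurable X)
    (htail : ∀ x : ℝ, β ≤ x → P {ω | x ≤ X ω} = ENNReal.ofReal (ξ / x)) :
    Integrable (fun ω => (max (X ω) β) ^ ((3:ℝ)/4)) P ∧
      ∫ ω, (max (X ω) β) ^ ((3:ℝ)/4) ∂P ≤ β ^ ((3:ℝ)/4) + 3 * ξ * β ^ (-(1/4):ℝ) := by
  set h : Ω → ℝ := fun ω => (max (X ω) β) ^ ((3:ℝ)/4) with hh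
  have hmeas : Measurable h := (hX.max measurable_const).pow_const _
  have hnn : ∀ ω, 0 ≤ h ω := fun ω => Real.rpow_nonneg (le_trans hβ.le (le_max_right _ _)) _
  set c : ℝ := β ^ ((3:ℝ)/4) with hc_def
  have hc : 0 < c := Real.rpow_pos_of_pos hβ _
  set K : ℝ := 3 * ξ * β ^ (-(1/4):ℝ) with hK_def
  have hK : 0 < K := by positivity
  have key := lintegral_eq_lintegral_meas_le P (Filter.Eventually.of_forall hnn) hmeas.aemeasurable
  -- inclusion of superlevel sets in tail sets
  have hsub : ∀ u : ℝ, c < u → {a | u ≤ h a} ⊆ {ω | u ^ ((4:ℝ)/3) ≤ X ω} := by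
    intro u hu a ha
    have hu0 : 0 < u := hc.trans hu
    have hm0 : (0:ℝ) ≤ max (X a) β := le_trans hβ.le (le_max_right _ _)
    have h1 : u ^ ((4:ℝ)/3) ≤ max (X a) β := by
      calc u ^ ((4:ℝ)/3) ≤ ((max (X a) β) ^ ((3:ℝ)/4)) ^ ((4:ℝ)/3) :=
            Real.rpow_le_rpow hu0.le ha (by norm_num)
        _ = max (X a) β := by
            rw [← Real.rpow_mul hm0]; norm_num
    have h2 : β < u ^ ((4:ℝ)/3) := by
      calc β = (β ^ ((3:ℝ)/4)) ^ ((4:ℝ)/3) := by rw [← Real.rpow_mul hβ.le]; norm_num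
        _ < u ^ ((4:ℝ)/3) := Real.rpow_lt_rpow hc.le hu (by norm_num)
    rcases le_or_gt (X a) β with hXa | hXa
    · exact absurd (h1.trans (max_le hXa le_rfl)) (not_le.mpr h2)
    · simpa [Set.mem_setOf_eq, max_eq_left hXa.le] using h1
  -- the integral over (c, ∞)
  have hint : IntegrableOn (fun u : ℝ => ξ * u ^ (-(4:ℝ)/3)) (Set.Ioi c) := by
    exact (integrableOn_Ioi_rpow_of_lt (by norm_num) hc).const_mul ξ
  have hval : ∫ u in Set.Ioi c, ξ * u ^ (-(4:ℝ)/3) = K := by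
    rw [MeasureTheory.integral_const_mul, integral_Ioi_rpow_of_lt (by norm_num) hc]
    rw [hK_def, hc_def, ← Real.rpow_mul hβ.le]
    norm_num
    ring
  have hIoi : ∫⁻ u in Set.Ioi c, P {a | u ≤ h a} ≤ ENNReal.ofReal K := by
    have hb1 : ∫⁻ u in Set.Ioi c, P {a | u ≤ h a}
        ≤ ∫⁻ u in Set.Ioi c, ENNReal.ofReal (ξ * u ^ (-(4:ℝ)/3)) := by
      apply setLIntegral_mono
        (ENNReal.measurable_ofReal.comp ((measurable_id'.pow_const _).const_mul ξ))
      intro u hu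
      have hu0 : 0 < u := hc.trans hu
      have hβu : β ≤ u ^ ((4:ℝ)/3) := le_of_lt (by
        calc β = (β ^ ((3:ℝ)/4)) ^ ((4:ℝ)/3) := by rw [← Real.rpow_mul hβ.le]; norm_num
          _ < u ^ ((4:ℝ)/3) := Real.rpow_lt_rpow hc.le hu (by norm_num))
      calc P {a | u ≤ h a} ≤ P {ω | u ^ ((4:ℝ)/3) ≤ X ω} := measure_mono (hsub u hu)
        _ = ENNReal.ofReal (ξ / u ^ ((4:ℝ)/3)) := htail _ hβu
        _ = ENNReal.ofReal (ξ * u ^ (-(4:ℝ)/3)) := by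
            rw [div_eq_mul_inv, ← Real.rpow_neg hu0.le]
            norm_num
    have hb2 : ∫⁻ u in Set.Ioi c, ENNReal.ofReal (ξ * u ^ (-(4:ℝ)/3)) = ENNReal.ofReal K := by
      rw [← ofReal_integral_eq_lintegral_ofReal hint]
      · rw [hval]
      · filter_upwards [ae_restrict_mem measurableSet_Ioi] with u hu
        have hu0 : 0 < u := hc.trans hu
        positivity
    exact hb1.trans_eq hb2
  have hIoc : ∫⁻ u in Set.Ioc 0 c, P {a | u ≤ h a} ≤ ENNReal.ofReal c := by
    calc ∫⁻ u in Set.Ioc 0 c, P {a | u ≤ h a} ≤ ∫⁻ _u in Set.Ioc 0 c, 1 :=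
          lintegral_mono (fun u => prob_le_one)
      _ = ENNReal.ofReal c := by simp [Real.volume_Ioc]
  have htotal : ∫⁻ ω, ENNReal.ofReal (h ω) ∂P ≤ ENNReal.ofReal (c + K) := by
    rw [key, show Set.Ioi (0:ℝ) = Set.Ioc 0 c ∪ Set.Ioi c from (Set.Ioc_union_Ioi_eq_Ioi hc.le).symm,
      lintegral_union measurableSet_Ioi (Set.Ioc_disjoint_Ioi le_rfl),
      ENNReal.ofReal_add hc.le hK.le]
    exact add_le_add hIoc hIoi
  have hfin : Integrable h P := by
    refine ⟨hmeas.aestronglyMeasurable, ?_⟩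
    rw [hasFiniteIntegral_iff_ofReal (Filter.Eventually.of_forall hnn)]
    exact lt_of_le_of_lt htotal ENNReal.ofReal_lt_top
  refine ⟨hfin, ?_⟩
  rw [integral_eq_lintegral_of_nonneg_ae (Filter.Eventually.of_forall hnn) hmeas.aestronglyMeasurable]
  exact ENNReal.toReal_le_of_le_ofReal (by positivity) htotal


lemma sqrt_phiW {lam β p : ℝ} (hβ : 0 < β) (hp : 0 < p) {n : ℕ} (hn : 0 < n) :
    Real.sqrt (phiW lam β p n) =
      ((n:ℝ)⁻¹) ^ lam * (β ^ ((1:ℝ)/2 - lam) *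
        (((n:ℝ) * p) ^ ((1:ℝ)/2) * (1 + β * ((n:ℝ) * p)) ^ (lam - 1/2))) := by
  have hn' : (0:ℝ) < n := Nat.cast_pos.mpr hn
  set t : ℝ := ((n:ℝ))⁻¹ with ht_def
  set s : ℝ := (n:ℝ) * p with hs_def
  have ht : 0 < t := by positivity
  have hs : 0 < s := by positivity
  have hq : 0 < 1 + β * s := by positivity
  have hsq : ∀ (x a : ℝ), 0 < x → (x ^ a) ^ 2 = x ^ (2 * a) := by
    intro x a hx
    rw [sq, ← Real.rpow_add hx]; ring_nf
  have hphi : phiW lam β p n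
      = (t ^ lam * (β ^ ((1:ℝ)/2 - lam) * (s ^ ((1:ℝ)/2) * (1 + β * s) ^ (lam - 1/2)))) ^ 2 := by
    have expand : (t ^ lam * (β ^ ((1:ℝ)/2 - lam) * (s ^ ((1:ℝ)/2) * (1 + β * s) ^ (lam - 1/2)))) ^ 2
        = (t ^ lam) ^ 2 * ((β ^ ((1:ℝ)/2 - lam)) ^ 2 * ((s ^ ((1:ℝ)/2)) ^ 2 * ((1 + β * s) ^ (lam - 1/2)) ^ 2)) := by
      ring
    rw [expand, hsq _ _ ht, hsq _ _ hβ, hsq _ _ hs, hsq _ _ hq]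
    have e1 : (2:ℝ) * (1/2) = 1 := by norm_num
    rw [show (2:ℝ) * (1/2 - lam) = 1 - 2*lam by ring, e1, Real.rpow_one,
      show (2:ℝ) * (lam - 1/2) = -1 + 2*lam by ring]
    -- now RHS = t^(2 lam) * (β^(1-2 lam) * (s * (1+β s)^(-1+2 lam)))
    have hβnp : β * (n:ℝ) * p = β * s := by rw [hs_def]; ring
    have h1 : 1 + (β * (n:ℝ) * p)⁻¹ = (1 + β * s) / (β * s) := by
      rw [hβnp]; field_simp; ring
    have hp_eq : p = t * s := by
      rw [ht_def, hs_def]; field_simp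
    rw [phiW, h1, Real.div_rpow hq.le (by positivity), hp_eq,
      Real.mul_rpow ht.le hs.le, Real.mul_rpow hβ.le hs.le, div_eq_mul_inv]
    rw [mul_inv, ← Real.rpow_neg hβ.le, ← Real.rpow_neg hs.le,
      show -(-1 + 2*lam) = 1 - 2*lam by ring]
    have hss : s ^ (2*lam) * s ^ (1 - 2*lam) = s := by
      rw [← Real.rpow_add hs]; norm_num
    linear_combination (t ^ (2*lam) * (1 + β*s) ^ (-1+2*lam) * β ^ (1-2*lam)) * hss
  rw [hphi, Real.sqrt_sq (by positivity)]


set_option maxHeartbeats 1000000 in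
theorem stmt_1
    {lam ξ β : ℝ} (hlam : lam < 1/2) (hξ : 0 < ξ) (hξβ : ξ ≤ β)
    {Ω : Type*} [MeasurableSpace Ω] (P : Measure Ω) [IsProbabilityMeasure P]
    (X : Ω → ℝ) (hX : Measurable X) (hXpos : ∀ ω, 0 < X ω)
    (htail : ∀ x : ℝ, β ≤ x → P {ω | x ≤ X ω} = ENNReal.ofReal (ξ / x))
    (hmom : Integrable (fun ω => (Flam lam (X ω))^2) P) :
    ∀ ε : ℝ, 0 < ε → ∃ δ : ℝ, 0 < δ ∧ ∀ p : ℝ, 0 < p → ∀ n : ℕ, 0 < n → (n : ℝ) * p ≤ δ →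
      |∫ ω, (Flam lam (p * X ω + 1/(n:ℝ)) - Flam lam (p * β + 1/(n:ℝ))) ∂P|
        ≤ ε * Real.sqrt (phiW lam β p n) := by
  intro ε hε
  have hβ : 0 < β := hξ.trans_le hξβ
  set M : ℝ := β ^ ((3:ℝ)/4) + 3 * ξ * β ^ (-(1/4):ℝ) with hM_def
  have hM : 0 < M := by positivity
  set c : ℝ := ε * β ^ ((1:ℝ)/2 - lam) * (1 + β) ^ (lam - 1/2) with hc_def
  have hc : 0 < c := by positivity
  clear_value M c
  refine ⟨min 1 (min ((c/(2*β))^2) ((3*c/(8*M))^4)),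
    lt_min one_pos (lt_min (pow_pos (div_pos hc (by positivity)) 2)
      (pow_pos (div_pos (by linarith) (by linarith)) 4)), ?_⟩
  intro p hp n hn hnp
  have hn' : (0:ℝ) < n := Nat.cast_pos.mpr hn
  set t : ℝ := ((n:ℝ))⁻¹ with ht_def
  set s : ℝ := (n:ℝ) * p with hs_def
  have ht : 0 < t := by positivity
  have hs : 0 < s := by positivity
  have hs1 : s ≤ 1 := le_trans hnp (min_le_left _ _)
  have hsδ2 : s ≤ (c/(2*β))^2 := le_trans hnp ((min_le_right _ _).trans (min_le_left _ _))
  have hsδ4 : s ≤ (3*c/(8*M))^4 := le_trans hnp ((min_le_right _ _).trans (min_le_right _ _))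
  have hp_eq : p = t * s := by rw [ht_def, hs_def]; field_simp
  obtain ⟨hInt, hMom⟩ := tail_moment hξ hβ P X hX htail
  rw [← hM_def] at hMom
  set h' : Ω → ℝ := fun ω => (max (X ω) β) ^ ((3:ℝ)/4) with hh'
  set A : ℝ := p * β * t ^ (lam - 1) with hA_def
  set B : ℝ := (4/3) * t ^ (lam - 3/4) * p ^ ((3:ℝ)/4) with hB_def
  have hA0 : 0 ≤ A := by positivity
  have hB0 : 0 ≤ B := by positivity
  have hh'0 : ∀ ω, 0 ≤ h' ω := fun ω => Real.rpow_nonneg (le_trans hβ.le (le_max_right _ _)) _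
  -- pointwise bound
  have hpoint : ∀ ω, |Flam lam (p * X ω + 1/(n:ℝ)) - Flam lam (p * β + 1/(n:ℝ))|
      ≤ A + B * h' ω := by
    intro ω
    rw [show 1/(n:ℝ) = t by rw [ht_def, one_div]]
    have hXω : 0 < X ω := hXpos ω
    have htpX : 0 < p * X ω + t := by positivity
    have htpβ : 0 < p * β + t := by positivity
    rcases le_or_gt β (X ω) with hcase | hcase
    · -- X ω ≥ β
      have e1 : p * β + t ≤ p * X ω + t :=
        add_le_add_left (mul_le_mul_of_nonneg_left hcase hp.le) t
      have hg0 : 0 ≤ Flam lam (p * X ω + t) - Flam lam (p * β + t) :=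
        sub_nonneg.mpr (flam_mono lam htpβ e1)
      rw [abs_of_nonneg hg0]
      have e2 : Flam lam t ≤ Flam lam (p * β + t) :=
        flam_mono lam ht (le_add_of_nonneg_left (by positivity))
      have e3 : Flam lam (t + p * X ω) - Flam lam t
          ≤ (4/3) * t ^ (lam - 3/4) * (p * X ω) ^ ((3:ℝ)/4) :=
        flam_le_34 hlam ht (by positivity)
      have e4 : h' ω = X ω ^ ((3:ℝ)/4) := by
        simp only [hh', max_eq_left hcase]
      have e5 : B * h' ω = (4/3) * t ^ (lam - 3/4) * (p * X ω) ^ ((3:ℝ)/4) := by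
        rw [e4, hB_def, Real.mul_rpow hp.le hXω.le]; ring
      have e6 : Flam lam (p * X ω + t) = Flam lam (t + p * X ω) := by rw [add_comm]
      linarith [e3, e2, hA0]
    · -- X ω < β
      have e1 : p * X ω + t ≤ p * β + t :=
        add_le_add_left (mul_le_mul_of_nonneg_left hcase.le hp.le) t
      have hg0 : Flam lam (p * X ω + t) - Flam lam (p * β + t) ≤ 0 :=
        sub_nonpos.mpr (flam_mono lam htpX e1)
      rw [abs_of_nonpos hg0, neg_sub]
      have e2 : Flam lam t ≤ Flam lam (p * X ω + t) :=
        flam_mono lam ht (le_add_of_nonneg_left (by positivity))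
      have e3 : Flam lam (t + p * β) - Flam lam t ≤ (p * β) * t ^ (lam - 1) :=
        flam_le_lin (by linarith) ht (by positivity)
      have e5 : 0 ≤ B * h' ω := mul_nonneg hB0 (hh'0 ω)
      have e6 : Flam lam (p * β + t) = Flam lam (t + p * β) := by rw [add_comm]
      have e7 : A = p * β * t ^ (lam - 1) := hA_def
      linarith [e3, e2, e5]
  -- integral bound
  have hdom : Integrable (fun ω => A + B * h' ω) P :=
    (integrable_const A).add (hInt.const_mul B)
  have step1 : |∫ ω, (Flam lam (p * X ω + 1/(n:ℝ)) - Flam lam (p * β + 1/(n:ℝ))) ∂P|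
      ≤ ∫ ω, |Flam lam (p * X ω + 1/(n:ℝ)) - Flam lam (p * β + 1/(n:ℝ))| ∂P := by
    rw [← Real.norm_eq_abs]
    refine (norm_integral_le_integral_norm _).trans_eq ?_
    simp [Real.norm_eq_abs]
  have step2 : ∫ ω, |Flam lam (p * X ω + 1/(n:ℝ)) - Flam lam (p * β + 1/(n:ℝ))| ∂P
      ≤ ∫ ω, (A + B * h' ω) ∂P :=
    integral_mono_of_nonneg (Filter.Eventually.of_forall (fun ω => abs_nonneg _)) hdom
      (Filter.Eventually.of_forall hpoint)
  have step3 : ∫ ω, (A + B * h' ω) ∂P = A + B * ∫ ω, h' ω ∂P := by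
    rw [integral_add (integrable_const A) (hInt.const_mul B), integral_const,
      MeasureTheory.integral_const_mul]
    simp
  have step4 : A + B * ∫ ω, h' ω ∂P ≤ A + B * M :=
    add_le_add_right (mul_le_mul_of_nonneg_left hMom hB0) A
  -- rewrite A and B*M with s and t
  have hA : A = β * s * t ^ lam := by
    have e : t ^ lam = t ^ (1:ℝ) * t ^ (lam - 1) := by rw [← Real.rpow_add ht]; norm_num
    rw [hA_def, hp_eq, e, Real.rpow_one]; ring
  have hBM : B * M = (4/3) * M * s ^ ((3:ℝ)/4) * t ^ lam := by
    have e : t ^ lam = t ^ ((3:ℝ)/4) * t ^ (lam - 3/4) := by rw [← Real.rpow_add ht]; norm_num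
    have ep : p ^ ((3:ℝ)/4) = t ^ ((3:ℝ)/4) * s ^ ((3:ℝ)/4) := by
      rw [hp_eq, Real.mul_rpow ht.le hs.le]
    rw [hB_def, ep, e]; ring
  -- the key scalar inequality
  have hss : s ^ ((1:ℝ)/2) * s ^ ((1:ℝ)/2) = s := by
    rw [← Real.rpow_add hs]; norm_num
  have h12 : s ^ ((1:ℝ)/2) ≤ c/(2*β) := by
    calc s ^ ((1:ℝ)/2) ≤ ((c/(2*β))^2) ^ ((1:ℝ)/2) :=
          Real.rpow_le_rpow hs.le hsδ2 (by norm_num)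
      _ = c/(2*β) := by
          rw [← Real.rpow_natCast (c/(2*β)) 2, ← Real.rpow_mul (by positivity)]
          norm_num
  have h14 : s ^ ((1:ℝ)/4) ≤ 3*c/(8*M) := by
    calc s ^ ((1:ℝ)/4) ≤ ((3*c/(8*M))^4) ^ ((1:ℝ)/4) :=
          Real.rpow_le_rpow hs.le hsδ4 (by norm_num)
      _ = 3*c/(8*M) := by
          rw [← Real.rpow_natCast (3*c/(8*M)) 4, ← Real.rpow_mul (by positivity)]
          norm_num
  have k1 : β * s ≤ (c/2) * s ^ ((1:ℝ)/2) := by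
    calc β * s = β * s ^ ((1:ℝ)/2) * s ^ ((1:ℝ)/2) := by rw [mul_assoc, hss]
      _ ≤ β * (c/(2*β)) * s ^ ((1:ℝ)/2) := by
          apply mul_le_mul_of_nonneg_right _ (Real.rpow_nonneg hs.le _)
          exact mul_le_mul_of_nonneg_left h12 hβ.le
      _ = (c/2) * s ^ ((1:ℝ)/2) := by field_simp
  have hss2 : s ^ ((1:ℝ)/4) * s ^ ((1:ℝ)/2) = s ^ ((3:ℝ)/4) := by
    rw [← Real.rpow_add hs]; norm_num
  have k2 : (4/3) * M * s ^ ((3:ℝ)/4) ≤ (c/2) * s ^ ((1:ℝ)/2) := by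
    calc (4/3) * M * s ^ ((3:ℝ)/4) = (4/3) * M * (s ^ ((1:ℝ)/4) * s ^ ((1:ℝ)/2)) := by rw [hss2]
      _ ≤ (4/3) * M * ((3*c/(8*M)) * s ^ ((1:ℝ)/2)) := by
          apply mul_le_mul_of_nonneg_left _ (by positivity)
          exact mul_le_mul_of_nonneg_right h14 (Real.rpow_nonneg hs.le _)
      _ = (c/2) * s ^ ((1:ℝ)/2) := by
          have hM' : M ≠ 0 := ne_of_gt hM
          rw [show (4:ℝ)/3 * M * ((3*c/(8*M)) * s ^ ((1:ℝ)/2)) = (M / M) * ((c/2) * s ^ ((1:ℝ)/2)) by ring, div_self hM', one_mul]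
  have k3 : c * s ^ ((1:ℝ)/2)
      ≤ ε * (β ^ ((1:ℝ)/2 - lam) * (s ^ ((1:ℝ)/2) * (1 + β * s) ^ (lam - 1/2))) := by
    have hq : (1 + β) ^ (lam - 1/2) ≤ (1 + β * s) ^ (lam - 1/2) := by
      apply Real.rpow_le_rpow_of_nonpos (by positivity) _ (by linarith)
      nlinarith
    calc c * s ^ ((1:ℝ)/2)
        = (ε * β ^ ((1:ℝ)/2 - lam) * s ^ ((1:ℝ)/2)) * (1 + β) ^ (lam - 1/2) := by
          rw [hc_def]; ring
      _ ≤ (ε * β ^ ((1:ℝ)/2 - lam) * s ^ ((1:ℝ)/2)) * (1 + β * s) ^ (lam - 1/2) := by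
          apply mul_le_mul_of_nonneg_left hq (by positivity)
      _ = ε * (β ^ ((1:ℝ)/2 - lam) * (s ^ ((1:ℝ)/2) * (1 + β * s) ^ (lam - 1/2))) := by ring
  -- conclude
  have hsqrt : Real.sqrt (phiW lam β p n)
      = t ^ lam * (β ^ ((1:ℝ)/2 - lam) * (s ^ ((1:ℝ)/2) * (1 + β * s) ^ (lam - 1/2))) := by
    rw [sqrt_phiW hβ hp hn]
  have final : A + B * M ≤ ε * Real.sqrt (phiW lam β p n) := by
    rw [hA, hBM, hsqrt]
    have key : β * s + (4/3) * M * s ^ ((3:ℝ)/4)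
        ≤ ε * (β ^ ((1:ℝ)/2 - lam) * (s ^ ((1:ℝ)/2) * (1 + β * s) ^ (lam - 1/2))) := by
      calc β * s + (4/3) * M * s ^ ((3:ℝ)/4)
          ≤ (c/2) * s ^ ((1:ℝ)/2) + (c/2) * s ^ ((1:ℝ)/2) := add_le_add k1 k2
        _ = c * s ^ ((1:ℝ)/2) := by ring
        _ ≤ _ := k3
    have htlam : 0 ≤ t ^ lam := Real.rpow_nonneg ht.le _
    calc β * s * t ^ lam + (4/3) * M * s ^ ((3:ℝ)/4) * t ^ lam
        = (β * s + (4/3) * M * s ^ ((3:ℝ)/4)) * t ^ lam := by ring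
      _ ≤ (ε * (β ^ ((1:ℝ)/2 - lam) * (s ^ ((1:ℝ)/2) * (1 + β * s) ^ (lam - 1/2)))) * t ^ lam :=
          mul_le_mul_of_nonneg_right key htlam
      _ = ε * (t ^ lam * (β ^ ((1:ℝ)/2 - lam) * (s ^ ((1:ℝ)/2) * (1 + β * s) ^ (lam - 1/2)))) := by
          ring
  linarith [step1, step2, step3.le, step4, final]
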